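/- arXiv:2507.23423 — 2 statements merged into one kernel-verified Lean document; each statement's English description precedes it below -/
import Mathlib

section
/- Let g be an M♮-convex function with finite nonempty effective domain and let b : E → {0,1}. If there exists no transition with respect to a point x ∈ dom g, then k̲ = ⟨b,x⟩. -/
open scoped BigOperators

/-- Characteristic vector of a singleton `{u}`. -/
def chiv {E : Type*} [DecidableEq E] (u : E) : E → ℤ := fun e => if e = u then 1 else 0

/-- Characteristic vector allowing the dummy symbol `z` (modelled as `none`), with `χ_z = 0`. -/
def chiOpt {E : Type*} [DecidableEq E] (v : Option E) : E → ℤ :=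
  fun e => match v with
  | none => 0
  | some w => chiv w e

/-- M♮-convexity (with nonempty effective domain) for `g : (E → ℤ) → ℝ ∪ {+∞}`. -/
def MnatConvex {E : Type*} [DecidableEq E] (g : (E → ℤ) → WithTop ℝ) : Prop :=
  (∃ x, g x < ⊤) ∧
  ∀ x y : E → ℤ, g x < ⊤ → g y < ⊤ → ∀ u : E, y u < x u →
    (g (x - chiv u) + g (y + chiv u) ≤ g x + g y) ∨
    (∃ v : E, x v < y v ∧
      g (x - chiv u + chiv v) + g (y + chiv u - chiv v) ≤ g x + g y)

/-- `⟨b,x⟩ = ∑ e, b e * x e`. -/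
def innerb {E : Type*} [Fintype E] (b : E → ℤ) (x : E → ℤ) : ℤ := ∑ e, b e * x e

/-- `𝒯_i`: the minimizers of `g` on `𝒫_i = {x ∈ dom g : ⟨b,x⟩ = i}`. -/
def Tset {E : Type*} [Fintype E] (g : (E → ℤ) → WithTop ℝ) (b : E → ℤ) (i : ℤ) :
    Set (E → ℤ) :=
  {x | g x < ⊤ ∧ innerb b x = i ∧ ∀ y : E → ℤ, g y < ⊤ → innerb b y = i → g x ≤ g y}

/-- A transition `(u,v)` with respect to `x`: `u ∈ E₁`, `v ∈ E₀ ∪ {z}`, and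
`x - χ_u + χ_v ∈ dom g`. -/
def IsTransition {E : Type*} [DecidableEq E] (g : (E → ℤ) → WithTop ℝ) (b : E → ℤ)
    (x : E → ℤ) (u : E) (v : Option E) : Prop :=
  b u = 1 ∧ (∀ w : E, v = some w → b w = 0) ∧ g (x - chiv u + chiOpt v) < ⊤

/-- The cost `g(x;u,v) = g(x - χ_u + χ_v) - g(x)` of a transition (as a real number;
both values are finite for transitions with respect to `x ∈ dom g`). -/
noncomputable def transCost {E : Type*} [DecidableEq E] (g : (E → ℤ) → WithTop ℝ)
    (x : E → ℤ) (u : E) (v : Option E) : ℝ :=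
  WithTop.untopD 0 (g (x - chiv u + chiOpt v)) - WithTop.untopD 0 (g x)

/-- A minimum transition with respect to `x`. -/
def IsMinTransition {E : Type*} [Fintype E] [DecidableEq E] (g : (E → ℤ) → WithTop ℝ)
    (b : E → ℤ) (x : E → ℤ) (u : E) (v : Option E) : Prop :=
  IsTransition g b x u v ∧
    ∀ (u' : E) (v' : Option E), IsTransition g b x u' v' →
      transCost g x u v ≤ transCost g x u' v'

lemma innerb_add_chiv {E : Type*} [Fintype E] [DecidableEq E] (b y : E → ℤ) (u : E) :
    innerb b (y + chiv u) = innerb b y + b u := by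
  simp only [innerb, chiv, Pi.add_apply, mul_add, Finset.sum_add_distrib]
  congr 1
  simp [mul_ite]

lemma innerb_sub_chiv {E : Type*} [Fintype E] [DecidableEq E] (b y : E → ℤ) (u : E) :
    innerb b (y - chiv u) = innerb b y - b u := by
  simp only [innerb, chiv, Pi.sub_apply, mul_sub, Finset.sum_sub_distrib]
  congr 1
  simp [mul_ite]

lemma key_lemma {E : Type*} [Fintype E] [DecidableEq E]
    (g : (E → ℤ) → WithTop ℝ) (b : E → ℤ)
    (hg : MnatConvex g)
    (hb : ∀ e : E, b e = 0 ∨ b e = 1)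
    (x : E → ℤ) (hx : g x < ⊤)
    (hno : ¬∃ (u : E) (v : Option E), IsTransition g b x u v) :
    ∀ n : ℕ, ∀ y : E → ℤ, g y < ⊤ → (∑ e, (x e - y e).natAbs) ≤ n →
      innerb b x ≤ innerb b y := by
  intro n
  induction n with
  | zero =>
    intro y hy hd
    have h0 : ∀ e ∈ Finset.univ (α := E), (x e - y e).natAbs = 0 :=
      Finset.sum_eq_zero_iff.mp (Nat.le_zero.mp hd)
    have : innerb b x = innerb b y := by
      apply Finset.sum_congr rfl
      intro e _
      have he := h0 e (Finset.mem_univ e)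
      have : x e = y e := by omega
      rw [this]
    omega
  | succ n ih =>
    intro y hy hd
    by_contra hlt
    push_neg at hlt
    have hsum : (0:ℤ) < ∑ e, b e * (x e - y e) := by
      have heq : ∑ e, b e * (x e - y e) = innerb b x - innerb b y := by
        simp [innerb, mul_sub, Finset.sum_sub_distrib]
      omega
    have h0 : ∑ _e : E, (0:ℤ) < ∑ e, b e * (x e - y e) := by simpa using hsum
    obtain ⟨u, -, hu⟩ := Finset.exists_lt_of_sum_lt h0
    have hbu : b u = 1 := by
      rcases hb u with h | h
      · simp [h] at hu
      · exact h
    have hxu : y u < x u := by rw [hbu] at hu; omega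
    have hxy : g x + g y < ⊤ := WithTop.add_lt_top.mpr ⟨hx, hy⟩
    rcases hg.2 x y hx hy u hxu with h1 | ⟨v, hvy, h2⟩
    · have htop : g (x - chiv u) < ⊤ :=
        (WithTop.add_lt_top.mp (lt_of_le_of_lt h1 hxy)).1
      refine hno ⟨u, none, hbu, fun w h => (by cases h), ?_⟩
      have heq : x - chiv u + chiOpt (E := E) none = x - chiv u := by
        funext e; simp [chiOpt]
      rwa [heq]
    · rcases hb v with hbv | hbv
      · have htop : g (x - chiv u + chiv v) < ⊤ :=
          (WithTop.add_lt_top.mp (lt_of_le_of_lt h2 hxy)).1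
        refine hno ⟨u, some v, hbu, fun w h => by cases h; exact hbv, ?_⟩
        have heq : x - chiv u + chiOpt (some v) = x - chiv u + chiv v := by
          funext e; simp [chiOpt]
        rwa [heq]
      · have hne : u ≠ v := by
          intro h; subst h; omega
        set y' := y + chiv u - chiv v with hy'
        have hy't : g y' < ⊤ :=
          (WithTop.add_lt_top.mp (lt_of_le_of_lt h2 hxy)).2
        have hib : innerb b y' = innerb b y := by
          rw [hy', innerb_sub_chiv, innerb_add_chiv, hbu, hbv]; ring
        have hdist : (∑ e, (x e - y' e).natAbs) + 2 = ∑ e, (x e - y e).natAbs := by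
          have hpt : ∀ e : E, (x e - y e).natAbs =
              (x e - y' e).natAbs + ((if e = u then 1 else 0) + (if e = v then 1 else 0)) := by
            intro e
            have hy'e : y' e = y e + (if e = u then (1:ℤ) else 0) - (if e = v then 1 else 0) := by
              simp [hy', chiv]
            by_cases heu : e = u
            · subst heu
              rw [if_pos rfl, if_neg hne] at hy'e ⊢
              omega
            · by_cases hev : e = v
              · subst hev
                rw [if_neg heu, if_pos rfl] at hy'e ⊢
                omega
              · rw [if_neg heu, if_neg hev] at hy'e ⊢
                omega
          calc (∑ e, (x e - y' e).natAbs) + 2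
              = (∑ e, (x e - y' e).natAbs) +
                ((∑ e : E, if e = u then 1 else 0) + (∑ e : E, if e = v then 1 else 0)) := by
                simp [Finset.sum_ite_eq']
            _ = ∑ e, ((x e - y' e).natAbs +
                ((if e = u then 1 else 0) + (if e = v then 1 else 0))) := by
                rw [Finset.sum_add_distrib, Finset.sum_add_distrib]
            _ = ∑ e, (x e - y e).natAbs := by
                exact Finset.sum_congr rfl fun e _ => (hpt e).symm
        have hrec := ih y' hy't (by omega)
        omega

/-- if there is no transition with respect to `x ∈ dom g`,
then `k̲ = ⟨b,x⟩`. -/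
theorem stmt_1 {E : Type*} [Fintype E] [DecidableEq E] [Nonempty E]
    (g : (E → ℤ) → WithTop ℝ) (b : E → ℤ)
    (hg : MnatConvex g)
    (hfin : {x : E → ℤ | g x < ⊤}.Finite)
    (hb : ∀ e : E, b e = 0 ∨ b e = 1)
    (kmin : ℤ)
    (hkmin : (Tset g b kmin).Nonempty ∧ ∀ k : ℤ, (Tset g b k).Nonempty → kmin ≤ k)
    (x : E → ℤ) (hx : g x < ⊤)
    (hno : ¬∃ (u : E) (v : Option E), IsTransition g b x u v) :
    kmin = innerb b x := by
  have key := key_lemma g b hg hb x hx hno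
  have hS : {y : E → ℤ | g y < ⊤ ∧ innerb b y = innerb b x}.Finite :=
    hfin.subset fun y hy => hy.1
  obtain ⟨x₀, hx₀S, hx₀min⟩ := Set.exists_min_image _ g hS ⟨x, hx, rfl⟩
  have hT : (Tset g b (innerb b x)).Nonempty :=
    ⟨x₀, hx₀S.1, hx₀S.2, fun y h1 h2 => hx₀min y ⟨h1, h2⟩⟩
  have h1 : kmin ≤ innerb b x := hkmin.2 _ hT
  obtain ⟨x₁, hx₁⟩ := hkmin.1
  have h2 : innerb b x ≤ kmin := by
    have := key (∑ e, (x e - x₁ e).natAbs) x₁ hx₁.1 le_rfl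
    rw [hx₁.2.1] at this
    exact this
  omega
end

section
/- Let h be an M-convex function with finite nonempty effective domain and let b : E → {0,1}. Assume k̲ + 1 ≤ k̄, let i satisfy k̲ + 1 ≤ i ≤ k̄, let x ∈ 𝒮_i and x' ∈ 𝒮_{k̲}, and let (s,t) be a minimum transition with respect to x. Then there exists v ∈ E_0 with x'(v) > x(v) such that (s,v) is also a minimum transition with respect to x. -/
open scoped BigOperators

/-- M-convexity (with nonempty effective domain) for `h : (E → ℤ) → ℝ ∪ {+∞}`. -/
def MConvex {E : Type*} [DecidableEq E] (h : (E → ℤ) → WithTop ℝ) : Prop :=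
  (∃ x, h x < ⊤) ∧
  ∀ x y : E → ℤ, h x < ⊤ → h y < ⊤ → ∀ u : E, y u < x u →
    ∃ v : E, x v < y v ∧
      h (x - chiv u + chiv v) + h (y + chiv u - chiv v) ≤ h x + h y

/-- `𝒮_i`: the minimizers of `h` on `𝒬_i = {x ∈ dom h : ⟨b,x⟩ = i}`. -/
def Sset {E : Type*} [Fintype E] (h : (E → ℤ) → WithTop ℝ) (b : E → ℤ) (i : ℤ) :
    Set (E → ℤ) :=
  {x | h x < ⊤ ∧ innerb b x = i ∧ ∀ y : E → ℤ, h y < ⊤ → innerb b y = i → h x ≤ h y}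

/-- A transition `(u,v)` with respect to `x`: `u ∈ E₁`, `v ∈ E₀`, and
`x - χ_u + χ_v ∈ dom h`. -/
def IsTransitionM {E : Type*} [DecidableEq E] (h : (E → ℤ) → WithTop ℝ) (b : E → ℤ)
    (x : E → ℤ) (u v : E) : Prop :=
  b u = 1 ∧ b v = 0 ∧ h (x - chiv u + chiv v) < ⊤

/-- The cost `h(x;u,v) = h(x - χ_u + χ_v) - h(x)` of a transition. -/
noncomputable def transCostM {E : Type*} [DecidableEq E] (h : (E → ℤ) → WithTop ℝ)
    (x : E → ℤ) (u v : E) : ℝ :=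
  (h (x - chiv u + chiv v)).untopD 0 - (h x).untopD 0

/-- A minimum transition with respect to `x`. -/
def IsMinTransitionM {E : Type*} [Fintype E] [DecidableEq E] (h : (E → ℤ) → WithTop ℝ)
    (b : E → ℤ) (x : E → ℤ) (u v : E) : Prop :=
  IsTransitionM h b x u v ∧
    ∀ u' v' : E, IsTransitionM h b x u' v' →
      transCostM h x u v ≤ transCostM h x u' v'


lemma innerb_add {E : Type*} [Fintype E] (b x y : E → ℤ) :
    innerb b (x + y) = innerb b x + innerb b y := by
  simp [innerb, mul_add, Finset.sum_add_distrib]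

lemma innerb_sub {E : Type*} [Fintype E] (b x y : E → ℤ) :
    innerb b (x - y) = innerb b x - innerb b y := by
  simp [innerb, mul_sub, Finset.sum_sub_distrib]

lemma innerb_chiv {E : Type*} [Fintype E] [DecidableEq E] (b : E → ℤ) (u : E) :
    innerb b (chiv u) = b u := by
  simp [innerb, chiv, mul_ite, Finset.sum_ite_eq']

lemma untop'_mono {a c : WithTop ℝ} (hc : c ≠ ⊤) (hac : a ≤ c) :
    a.untopD 0 ≤ c.untopD 0 := by
  lift c to ℝ using hc
  lift a to ℝ using ne_top_of_le_ne_top (by simp) hac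
  simpa using hac

lemma Sset_nonempty {E : Type*} [Fintype E] (h : (E → ℤ) → WithTop ℝ) (b : E → ℤ)
    (hfin : {x : E → ℤ | h x < ⊤}.Finite) (k : ℤ) (z : E → ℤ)
    (hz : h z < ⊤) (hzk : innerb b z = k) : (Sset h b k).Nonempty := by
  obtain ⟨a, ha, hmin⟩ := Set.exists_min_image {x : E → ℤ | h x < ⊤ ∧ innerb b x = k} h
    (hfin.subset fun w hw => hw.1) ⟨z, hz, hzk⟩
  exact ⟨a, ha.1, ha.2, fun y hy hyk => hmin y ⟨hy, hyk⟩⟩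

/-- if `(s,t)` is a minimum transition with respect to `x ∈ 𝒮_i`
and `x' ∈ 𝒮_{k̲}`, then there exists `v ∈ E₀` with `x'(v) > x(v)` such that `(s,v)`
is also a minimum transition with respect to `x`. -/
theorem stmt_10 {E : Type*} [Fintype E] [DecidableEq E] [Nonempty E]
    (h : (E → ℤ) → WithTop ℝ) (b : E → ℤ)
    (hM : MConvex h)
    (hfin : {x : E → ℤ | h x < ⊤}.Finite)
    (hb : ∀ e : E, b e = 0 ∨ b e = 1)
    (kmin kmax : ℤ)
    (hkmin : (Sset h b kmin).Nonempty ∧ ∀ k : ℤ, (Sset h b k).Nonempty → kmin ≤ k)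
    (hkmax : (Sset h b kmax).Nonempty ∧ ∀ k : ℤ, (Sset h b k).Nonempty → k ≤ kmax)
    (hgap : kmin + 1 ≤ kmax)
    (i : ℤ) (hi1 : kmin + 1 ≤ i) (hi2 : i ≤ kmax)
    (x : E → ℤ) (hx : x ∈ Sset h b i)
    (x' : E → ℤ) (hx' : x' ∈ Sset h b kmin)
    (s t : E) (hst : IsMinTransitionM h b x s t) :
    ∃ v : E, b v = 0 ∧ x v < x' v ∧ IsMinTransitionM h b x s v := by
  obtain ⟨⟨hbs, hbt, hdt⟩, hminT⟩ := hst
  obtain ⟨hx'dom, hx'k, hx'min⟩ := hx'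
  by_cases hcase : x t < x' t
  · exact ⟨t, hbt, hcase, ⟨hbs, hbt, hdt⟩, hminT⟩
  · push_neg at hcase
    set y := x - chiv s + chiv t with hy
    have hst_ne : t ≠ s := by intro he; rw [he] at hbt; omega
    have hyt : y t = x t + 1 := by simp [hy, chiv, hst_ne]
    have hxt' : x' t < y t := by omega
    obtain ⟨v, hv1, hv2⟩ := hM.2 y x' hdt hx'dom t hxt'
    have hyv : y - chiv t + chiv v = x - chiv s + chiv v := by rw [hy]; abel
    rw [hyv] at hv2
    have hsum_lt : h (x - chiv s + chiv v) + h (x' + chiv t - chiv v) < ⊤ :=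
      lt_of_le_of_lt hv2 (WithTop.add_lt_top.2 ⟨hdt, hx'dom⟩)
    have hA : h (x - chiv s + chiv v) < ⊤ := (WithTop.add_lt_top.1 hsum_lt).1
    have hB : h (x' + chiv t - chiv v) < ⊤ := (WithTop.add_lt_top.1 hsum_lt).2
    have hibq : innerb b (x' + chiv t - chiv v) = kmin + b t - b v := by
      rw [innerb_sub, innerb_add, innerb_chiv, innerb_chiv, hx'k]
    rcases hb v with hbv | hbv
    · have hq : innerb b (x' + chiv t - chiv v) = kmin := by rw [hibq, hbt, hbv]; ring
      have hx'le := hx'min _ hB hq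
      have hle : h (x - chiv s + chiv v) ≤ h y := by
        have h1 : h (x - chiv s + chiv v) + h x' ≤ h y + h x' :=
          le_trans (add_le_add_right hx'le _) hv2
        exact (WithTop.add_le_add_iff_right hx'dom.ne).1 h1
      have hvs : v ≠ s := by intro he; rw [he] at hbv; omega
      have hvt : v ≠ t := by
        intro he; rw [he] at hv1; rw [hyt] at hv1; omega
      have hyvv : y v = x v := by simp [hy, chiv, hvs, hvt]
      have hxv : x v < x' v := by rw [hyvv] at hv1; exact hv1
      refine ⟨v, hbv, hxv, ⟨hbs, hbv, hA⟩, fun u' v' htr => ?_⟩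
      have h1 : transCostM h x s v ≤ transCostM h x s t :=
        sub_le_sub_right (untop'_mono hdt.ne (hy ▸ hle)) _
      exact h1.trans (hminT u' v' htr)
    · exfalso
      have hq : innerb b (x' + chiv t - chiv v) = kmin - 1 := by rw [hibq, hbt, hbv]; ring
      have := hkmin.2 _ (Sset_nonempty h b hfin (kmin - 1) _ hB hq)
      omega
end
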